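/- Fix constants b ≥ 1 and κ ∈ ℕ. Let {X_{k,i} : k ∈ {0, 1, …, b}, i ∈ ℕ} be a jointly independent family of identically distributed real-valued random variables with E = 0 and second moment 1. For d > κ, let L_d be the contrastive loss term computed from the full d-dimensional representations z_k^{(d)} = (X_{k,0}, …, X_{k,d−1}) and let L'_d be the contrastive loss term computed from the truncated representations z_{k,s}^{(d)} = (X_{k,0}, …, X_{k,d−κ−1}), where in each case the loss is exp(S(anchor, anchor)) / (exp(S(anchor, anchor)) + Σ_{k=1}^{b} exp(S(anchor, negative_k))) with S the cosine similarity under the zero-division convention, anchor the k = 0 vector, and negatives the k = 1, …, b vectors. Then L_d − L'_d converges to 0 in probability as d → ∞; that is, the contrastive loss of the ideal encoder and of the incomplete encoder converge to the same limit e/(e + b). -/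

import Mathlib

open MeasureTheory ProbabilityTheory Filter Finset
open scoped Topology

/-- Cosine similarity of two vectors in Euclidean space, with the convention
that division by zero yields `0` (which is the Lean convention for `/`). -/
noncomputable def cosSim {n : ℕ} (u v : EuclideanSpace ℝ (Fin n)) : ℝ :=
  (inner ℝ u v : ℝ) / (‖u‖ * ‖v‖)

/-- The random vector `(X 0, …, X (n-1)) ∈ ℝⁿ` built from a sequence of
real random variables; with `n = d` this is the full representation `z⁽ᵈ⁾`,
and with `n = d - κ` it is the truncated representation `z_s⁽ᵈ⁾`. -/
noncomputable def zvec {Ω : Type*} (X : ℕ → Ω → ℝ) (n : ℕ) (ω : Ω) :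
    EuclideanSpace ℝ (Fin n) :=
  (WithLp.equiv 2 (Fin n → ℝ)).symm fun i => X i ω

/-- The contrastive loss term
`exp(S(anchor,anchor)) / (exp(S(anchor,anchor)) + ∑_{k=1}^b exp(S(anchor,negative_k)))`
built from the first `n` coordinates of the representations `X k`, where the
anchor is the `k = 0` vector and the negatives are the `k = 1,…,b` vectors,
and `S` is cosine similarity with the zero-division convention. -/
noncomputable def contrastiveLoss {Ω : Type*} {b : ℕ}
    (X : Fin (b + 1) → ℕ → Ω → ℝ) (n : ℕ) (ω : Ω) : ℝ :=
  Real.exp (cosSim (zvec (X 0) n ω) (zvec (X 0) n ω)) /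
    (Real.exp (cosSim (zvec (X 0) n ω) (zvec (X 0) n ω)) +
      ∑ k ∈ Finset.Ioi (0 : Fin (b + 1)),
        Real.exp (cosSim (zvec (X 0) n ω) (zvec (X k) n ω)))

/- ### Auxiliary lemmas -/

lemma cosSim_zvec {Ω : Type*} (f g : ℕ → Ω → ℝ) (n : ℕ) (ω : Ω) :
    cosSim (zvec f n ω) (zvec g n ω) =
      (∑ i ∈ range n, f i ω * g i ω) /
        (Real.sqrt (∑ i ∈ range n, (f i ω) ^ 2) * Real.sqrt (∑ i ∈ range n, (g i ω) ^ 2)) := by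
  simp only [cosSim, zvec, PiLp.inner_apply, RCLike.inner_apply, conj_trivial,
    EuclideanSpace.norm_eq, WithLp.equiv_symm_apply, PiLp.toLp_apply, Real.norm_eq_abs, sq_abs]
  simp_rw [mul_comm (g _ ω) (f _ ω)]
  rw [← Fin.sum_univ_eq_sum_range (fun i => f i ω * g i ω),
    ← Fin.sum_univ_eq_sum_range (fun i => f i ω ^ 2),
    ← Fin.sum_univ_eq_sum_range (fun i => g i ω ^ 2)]

lemma div_sqrt_scale (a s t n : ℝ) (hn : 0 < n) :
    (n⁻¹ * a) / (Real.sqrt (n⁻¹ * s) * Real.sqrt (n⁻¹ * t)) =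
      a / (Real.sqrt s * Real.sqrt t) := by
  have hninv : (0 : ℝ) ≤ n⁻¹ := inv_nonneg.2 hn.le
  rw [Real.sqrt_mul hninv, Real.sqrt_mul hninv,
    show Real.sqrt n⁻¹ * Real.sqrt s * (Real.sqrt n⁻¹ * Real.sqrt t)
      = (Real.sqrt n⁻¹ * Real.sqrt n⁻¹) * (Real.sqrt s * Real.sqrt t) from by ring,
    Real.mul_self_sqrt hninv, mul_div_mul_left _ _ (inv_ne_zero hn.ne')]

lemma measurable_cosSim_zvec {Ω : Type*} {mΩ : MeasurableSpace Ω} (f g : ℕ → Ω → ℝ)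
    (hf : ∀ i, Measurable (f i)) (hg : ∀ i, Measurable (g i)) (n : ℕ) :
    Measurable (fun ω => cosSim (zvec f n ω) (zvec g n ω)) := by
  simp only [cosSim_zvec]
  exact (Finset.measurable_sum _ fun i _ => (hf i).mul (hg i)).div
    (((Finset.measurable_sum _ fun i _ => (hf i).pow_const 2).sqrt).mul
      ((Finset.measurable_sum _ fun i _ => (hg i).pow_const 2).sqrt))

lemma measurable_contrastiveLoss {Ω : Type*} {mΩ : MeasurableSpace Ω} {b : ℕ}
    (X : Fin (b + 1) → ℕ → Ω → ℝ) (hmeas : ∀ k i, Measurable (X k i)) (n : ℕ) :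
    Measurable (fun ω => contrastiveLoss X n ω) := by
  have h : ∀ k : Fin (b + 1),
      Measurable fun ω => cosSim (zvec (X 0) n ω) (zvec (X k) n ω) :=
    fun k => measurable_cosSim_zvec _ _ (hmeas 0) (hmeas k) n
  exact ((h 0).exp).div (((h 0).exp).add (Finset.measurable_sum _ fun k _ => (h k).exp))

/-- Almost-sure convergence of the contrastive loss to `e / (e + b)`. -/
lemma contrastiveLoss_tendsto_ae
    {Ω : Type*} {mΩ : MeasurableSpace Ω} (μ : Measure Ω) [IsProbabilityMeasure μ]
    {b : ℕ} (X : Fin (b + 1) → ℕ → Ω → ℝ)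
    (hmeas : ∀ k i, Measurable (X k i))
    (hindep : iIndepFun (fun p : Fin (b + 1) × ℕ => X p.1 p.2) μ)
    (hident : ∀ k i, IdentDistrib (X k i) (X 0 0) μ μ)
    (hint : Integrable (fun ω => (X 0 0 ω) ^ 2) μ)
    (hmean : ∫ ω, X 0 0 ω ∂μ = 0)
    (hsecond : ∫ ω, (X 0 0 ω) ^ 2 ∂μ = 1) :
    ∀ᵐ ω ∂μ, Tendsto (fun n : ℕ => contrastiveLoss X n ω) atTop
      (𝓝 (Real.exp 1 / (Real.exp 1 + b))) := by
  have hL2 : MemLp (X 0 0) 2 μ :=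
    (memLp_two_iff_integrable_sq (hmeas 0 0).aestronglyMeasurable).2 hint
  have hint1 : Integrable (X 0 0) μ := hL2.integrable one_le_two
  have hintki : ∀ k i, Integrable (X k i) μ := fun k i => (hident k i).integrable_iff.2 hint1
  have hsqident : ∀ k i, IdentDistrib (fun ω => X k i ω ^ 2) (fun ω => X 0 0 ω ^ 2) μ μ :=
    fun k i => (hident k i).comp (measurable_id.pow_const 2)
  have hsqint : ∀ k i, Integrable (fun ω => X k i ω ^ 2) μ :=
    fun k i => (hsqident k i).integrable_iff.2 hint
  -- SLLN for squares
  have hS : ∀ k : Fin (b + 1), ∀ᵐ ω ∂μ,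
      Tendsto (fun n : ℕ => (n : ℝ)⁻¹ * ∑ i ∈ range n, X k i ω ^ 2) atTop (𝓝 1) := by
    intro k
    have hpair : Pairwise (Function.onFun (IndepFun · · μ) fun i ω => X k i ω ^ 2) := by
      intro i j hij
      exact (hindep.indepFun (show ((k, i) : Fin (b + 1) × ℕ) ≠ (k, j) by
        simp [Prod.ext_iff, hij])).comp (measurable_id.pow_const 2) (measurable_id.pow_const 2)
    have hid : ∀ i, IdentDistrib (fun ω => X k i ω ^ 2) (fun ω => X k 0 ω ^ 2) μ μ :=
      fun i => (hsqident k i).trans (hsqident k 0).symm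
    have hmean2 : (∫ ω, X k 0 ω ^ 2 ∂μ) = 1 := by rw [(hsqident k 0).integral_eq, hsecond]
    filter_upwards [strong_law_ae (μ := μ) (fun i ω => X k i ω ^ 2) (hsqint k 0) hpair hid]
      with ω hω
    simpa [smul_eq_mul, hmean2] using hω
  -- SLLN for cross terms
  have hC : ∀ k : Fin (b + 1), k ≠ 0 → ∀ᵐ ω ∂μ,
      Tendsto (fun n : ℕ => (n : ℝ)⁻¹ * ∑ i ∈ range n, X 0 i ω * X k i ω) atTop (𝓝 0) := by
    intro k hk
    have hindep0k : ∀ i : ℕ, IndepFun (X 0 i) (X k i) μ := fun i =>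
      hindep.indepFun (show ((0, i) : Fin (b + 1) × ℕ) ≠ (k, i) by
        simp [Prod.ext_iff, Ne.symm hk])
    have hYint : ∀ i, Integrable (fun ω => X 0 i ω * X k i ω) μ := fun i =>
      (hindep0k i).integrable_mul (hintki 0 i) (hintki k i)
    have hpairY : Pairwise (Function.onFun (IndepFun · · μ) fun i ω => X 0 i ω * X k i ω) := by
      intro i j hij
      have h := hindep.indepFun_prodMk_prodMk (fun p => (hmeas p.1 p.2)) (0, i) (k, i)
        (0, j) (k, j)
        (by simp [Prod.ext_iff, hij]) (by simp [Prod.ext_iff, Ne.symm hk])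
        (by simp [Prod.ext_iff, hk]) (by simp [Prod.ext_iff, hij])
      exact h.comp (measurable_fst.mul measurable_snd) (measurable_fst.mul measurable_snd)
    have hprodid : ∀ i, IdentDistrib (fun ω => X 0 i ω * X k i ω)
        (fun ω => X 0 0 ω * X k 0 ω) μ μ := by
      intro i
      have hp : IdentDistrib (fun ω => (X 0 i ω, X k i ω)) (fun ω => (X 0 0 ω, X k 0 ω)) μ μ := by
        refine ⟨((hmeas 0 i).prodMk (hmeas k i)).aemeasurable,
          ((hmeas 0 0).prodMk (hmeas k 0)).aemeasurable, ?_⟩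
        rw [(indepFun_iff_map_prod_eq_prod_map_map (hmeas 0 i).aemeasurable
            (hmeas k i).aemeasurable).1 (hindep0k i),
          (indepFun_iff_map_prod_eq_prod_map_map (hmeas 0 0).aemeasurable
            (hmeas k 0).aemeasurable).1 (hindep0k 0),
          ((hident 0 i).trans (hident 0 0).symm).map_eq,
          ((hident k i).trans (hident k 0).symm).map_eq]
      exact hp.comp (measurable_fst.mul measurable_snd)
    have hmeanY : ∫ ω, X 0 0 ω * X k 0 ω ∂μ = 0 := by
      have h := (hindep0k 0).integral_mul_eq_mul_integral (hmeas 0 0).aestronglyMeasurable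
        (hmeas k 0).aestronglyMeasurable
      have hk0 : ∫ ω, X k 0 ω ∂μ = 0 := by rw [(hident k 0).integral_eq, hmean]
      calc ∫ ω, X 0 0 ω * X k 0 ω ∂μ = ∫ ω, (X 0 0 * X k 0) ω ∂μ := rfl
        _ = (∫ ω, X 0 0 ω ∂μ) * ∫ ω, X k 0 ω ∂μ := h
        _ = 0 := by rw [hmean, hk0, mul_zero]
    filter_upwards [strong_law_ae (μ := μ) (fun i ω => X 0 i ω * X k i ω) (hYint 0)
      hpairY hprodid] with ω hω
    simpa [smul_eq_mul, hmeanY] using hω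
  -- combine
  have hC' : ∀ k : Fin (b + 1), ∀ᵐ ω ∂μ, k ≠ 0 →
      Tendsto (fun n : ℕ => (n : ℝ)⁻¹ * ∑ i ∈ range n, X 0 i ω * X k i ω) atTop (𝓝 0) := by
    intro k
    by_cases hk : k = 0
    · exact Eventually.of_forall fun ω h => absurd hk h
    · filter_upwards [hC k hk] with ω hω _ using hω
  have hSall : ∀ᵐ ω ∂μ, ∀ k : Fin (b + 1),
      Tendsto (fun n : ℕ => (n : ℝ)⁻¹ * ∑ i ∈ range n, X k i ω ^ 2) atTop (𝓝 1) :=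
    (ae_all_iff).2 hS
  have hCall : ∀ᵐ ω ∂μ, ∀ k : Fin (b + 1), k ≠ 0 →
      Tendsto (fun n : ℕ => (n : ℝ)⁻¹ * ∑ i ∈ range n, X 0 i ω * X k i ω) atTop (𝓝 0) :=
    (ae_all_iff).2 hC'
  filter_upwards [hSall, hCall] with ω hSω hCω
  -- pointwise convergence of the cosine similarities
  have hcos0 : Tendsto (fun n : ℕ => cosSim (zvec (X 0) n ω) (zvec (X 0) n ω)) atTop (𝓝 1) := by
    have hev : ∀ᶠ n : ℕ in atTop,
        cosSim (zvec (X 0) n ω) (zvec (X 0) n ω) = 1 := by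
      filter_upwards [(hSω 0).eventually (eventually_gt_nhds (by norm_num : (0 : ℝ) < 1))]
        with n hn
      have h0 : (0 : ℝ) ≤ ∑ i ∈ range n, X 0 i ω ^ 2 :=
        Finset.sum_nonneg fun i _ => sq_nonneg _
      have hne : (∑ i ∈ range n, X 0 i ω ^ 2) ≠ 0 := by
        intro h; rw [h, mul_zero] at hn; exact lt_irrefl _ hn
      have hmulself : (∑ i ∈ range n, X 0 i ω * X 0 i ω) = ∑ i ∈ range n, X 0 i ω ^ 2 := by
        simp [sq]
      rw [cosSim_zvec, Real.mul_self_sqrt h0, hmulself, div_self hne]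
    exact Tendsto.congr' (hev.mono fun n hn => hn.symm) tendsto_const_nhds
  have hcosk : ∀ k : Fin (b + 1), k ≠ 0 →
      Tendsto (fun n : ℕ => cosSim (zvec (X 0) n ω) (zvec (X k) n ω)) atTop (𝓝 0) := by
    intro k hk
    have hlim : Tendsto (fun n : ℕ =>
        ((n : ℝ)⁻¹ * ∑ i ∈ range n, X 0 i ω * X k i ω) /
          (Real.sqrt ((n : ℝ)⁻¹ * ∑ i ∈ range n, X 0 i ω ^ 2) *
            Real.sqrt ((n : ℝ)⁻¹ * ∑ i ∈ range n, X k i ω ^ 2))) atTop (𝓝 0) := by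
      have hd : Tendsto (fun n : ℕ =>
          Real.sqrt ((n : ℝ)⁻¹ * ∑ i ∈ range n, X 0 i ω ^ 2) *
            Real.sqrt ((n : ℝ)⁻¹ * ∑ i ∈ range n, X k i ω ^ 2)) atTop (𝓝 1) := by
        have h1 := (Real.continuous_sqrt.tendsto 1).comp (hSω 0)
        have h2 := (Real.continuous_sqrt.tendsto 1).comp (hSω k)
        have := h1.mul h2
        simpa using this
      have := (hCω k hk).div hd one_ne_zero
      rw [zero_div] at this
      exact this
    refine Tendsto.congr' ?_ hlim
    filter_upwards [eventually_ge_atTop 1] with n hn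
    have hnpos : (0 : ℝ) < (n : ℝ) := by exact_mod_cast Nat.lt_of_lt_of_le Nat.zero_lt_one hn
    have hn0 : (n : ℝ) ≠ 0 := ne_of_gt hnpos
    rw [cosSim_zvec]
    exact div_sqrt_scale _ _ _ _ hnpos
  -- assemble the loss
  have hnum : Tendsto (fun n : ℕ =>
      Real.exp (cosSim (zvec (X 0) n ω) (zvec (X 0) n ω))) atTop (𝓝 (Real.exp 1)) :=
    (Real.continuous_exp.tendsto 1).comp hcos0
  have hsum : Tendsto (fun n : ℕ => ∑ k ∈ Finset.Ioi (0 : Fin (b + 1)),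
      Real.exp (cosSim (zvec (X 0) n ω) (zvec (X k) n ω))) atTop (𝓝 b) := by
    have : Tendsto (fun n : ℕ => ∑ k ∈ Finset.Ioi (0 : Fin (b + 1)),
        Real.exp (cosSim (zvec (X 0) n ω) (zvec (X k) n ω))) atTop
        (𝓝 (∑ k ∈ Finset.Ioi (0 : Fin (b + 1)), Real.exp 0)) :=
      tendsto_finset_sum _ fun k hk =>
        (Real.continuous_exp.tendsto 0).comp
          (hcosk k (Fin.pos_iff_ne_zero.1 (mem_Ioi.1 hk)))
    simpa [Real.exp_zero, Fin.card_Ioi] using this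
  have hden : Tendsto (fun n : ℕ =>
      Real.exp (cosSim (zvec (X 0) n ω) (zvec (X 0) n ω)) +
        ∑ k ∈ Finset.Ioi (0 : Fin (b + 1)),
          Real.exp (cosSim (zvec (X 0) n ω) (zvec (X k) n ω))) atTop
      (𝓝 (Real.exp 1 + b)) := hnum.add hsum
  have hdenne : Real.exp 1 + (b : ℝ) ≠ 0 := by positivity
  exact hnum.div hden hdenne

/-- **The paper's Theorem 1.**
Fix `b ≥ 1` and a truncation constant `κ`.  Let `{X k i : k ∈ {0,…,b}, i ∈ ℕ}`
be a jointly independent family of identically distributed real random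
variables with mean `0` and second moment `1`.  Let `L_d` be the contrastive
loss term computed from the full `d`-dimensional representations
`z_k⁽ᵈ⁾ = (X k 0, …, X k (d-1))` and `L'_d` the one computed from the
truncated representations `z_{k,s}⁽ᵈ⁾ = (X k 0, …, X k (d-κ-1))`.  Then
`L_d − L'_d` converges to `0` in probability as `d → ∞`; that is, the
contrastive loss of the ideal encoder and of the incomplete encoder converge
to the same limit `e / (e + b)`. -/
theorem contrastive_loss_ideal_sub_truncated_tendsto_zero_inProbability
    {Ω : Type*} {mΩ : MeasurableSpace Ω} (μ : Measure Ω) [IsProbabilityMeasure μ]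
    (b : ℕ) (hb : 1 ≤ b) (κ : ℕ)
    (X : Fin (b + 1) → ℕ → Ω → ℝ)
    (hmeas : ∀ k i, Measurable (X k i))
    (hindep : iIndepFun (fun p : Fin (b + 1) × ℕ => X p.1 p.2) μ)
    (hident : ∀ k i, IdentDistrib (X k i) (X 0 0) μ μ)
    (hint : Integrable (fun ω => (X 0 0 ω) ^ 2) μ)
    (hmean : ∫ ω, X 0 0 ω ∂μ = 0)
    (hsecond : ∫ ω, (X 0 0 ω) ^ 2 ∂μ = 1) :
    TendstoInMeasure μ
      (fun (d : ℕ) ω => contrastiveLoss X d ω - contrastiveLoss X (d - κ) ω)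
      atTop (fun _ => (0 : ℝ)) ∧
    TendstoInMeasure μ (fun (d : ℕ) ω => contrastiveLoss X d ω)
      atTop (fun _ => Real.exp 1 / (Real.exp 1 + b)) ∧
    TendstoInMeasure μ (fun (d : ℕ) ω => contrastiveLoss X (d - κ) ω)
      atTop (fun _ => Real.exp 1 / (Real.exp 1 + b)) := by
  have hae := contrastiveLoss_tendsto_ae μ X hmeas hindep hident hint hmean hsecond
  have hmeasL : ∀ n : ℕ, AEStronglyMeasurable (fun ω => contrastiveLoss X n ω) μ :=
    fun n => (measurable_contrastiveLoss X hmeas n).aestronglyMeasurable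
  have hae' : ∀ᵐ ω ∂μ, Tendsto (fun d : ℕ => contrastiveLoss X (d - κ) ω) atTop
      (𝓝 (Real.exp 1 / (Real.exp 1 + b))) := by
    filter_upwards [hae] with ω hω using hω.comp (tendsto_sub_atTop_nat κ)
  have h2 : TendstoInMeasure μ (fun (d : ℕ) ω => contrastiveLoss X d ω) atTop
      (fun _ => Real.exp 1 / (Real.exp 1 + b)) :=
    tendstoInMeasure_of_tendsto_ae hmeasL hae
  have h3 : TendstoInMeasure μ (fun (d : ℕ) ω => contrastiveLoss X (d - κ) ω) atTop
      (fun _ => Real.exp 1 / (Real.exp 1 + b)) :=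
    tendstoInMeasure_of_tendsto_ae (fun n => hmeasL (n - κ)) hae'
  have h1 : TendstoInMeasure μ
      (fun (d : ℕ) ω => contrastiveLoss X d ω - contrastiveLoss X (d - κ) ω) atTop
      (fun _ => (0 : ℝ)) := by
    apply tendstoInMeasure_of_tendsto_ae (fun n => (hmeasL n).sub (hmeasL (n - κ)))
    filter_upwards [hae] with ω hω
    simpa using hω.sub (hω.comp (tendsto_sub_atTop_nat κ))
  exact ⟨h1, h2, h3⟩
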